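/- Let H be a Hopf algebra over a field k, (V, ρ) a partial H-comodule and x : H → k a k-algebra homomorphism. Define the linear map P_x : V → V by P_x = (V ⊗ x ⊗ x)(V ⊗ S ⊗ H)(ρ ⊗ H)ρ, i.e., in Sweedler-type notation P_x(v) = v^{(0)(0)} x(S(v^{(0)(1)}) v^{(1)}). Then P_x is idempotent: P_x ∘ P_x = P_x. -/

import Mathlib

open TensorProduct CategoryTheory CategoryTheory.Limits

noncomputable section

universe u

variable (k : Type u) [Field k] (H : Type u) [Ring H] [HopfAlgebra k H]

/-- Multiply the last two tensor factors using the multiplication of `H`. -/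
def mulLast (X : Type u) [AddCommGroup X] [Module k X] :
    ((X ⊗[k] H) ⊗[k] H) →ₗ[k] X ⊗[k] H :=
  (LinearMap.lTensor X (LinearMap.mul' k H)) ∘ₗ (TensorProduct.assoc k X H H).toLinearMap

/-- Comultiply the last tensor factor using the comultiplication of `H`. -/
def comulLast (X : Type u) [AddCommGroup X] [Module k X] :
    (X ⊗[k] H) →ₗ[k] (X ⊗[k] H) ⊗[k] H :=
  (TensorProduct.assoc k X H H).symm.toLinearMap ∘ₗ LinearMap.lTensor X Coalgebra.comul

/-- Apply the antipode to the last tensor factor. -/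
def antLast (X : Type u) [AddCommGroup X] [Module k X] :
    (X ⊗[k] H) →ₗ[k] X ⊗[k] H :=
  LinearMap.lTensor X (HopfAlgebra.antipode (R := k) (A := H))

/-- Apply the counit to the last tensor factor. -/
def counitLast (X : Type u) [AddCommGroup X] [Module k X] :
    (X ⊗[k] H) →ₗ[k] X :=
  (TensorProduct.rid k X).toLinearMap ∘ₗ LinearMap.lTensor X Coalgebra.counit

variable {M : Type u} [AddCommGroup M] [Module k M]

/-- `(M, ρ)` is a (right, algebraic) partial `H`-comodule: (PCM1) `ρ` is counital,
(PCM2) and (PCM3) express partial coassociativity. -/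
structure IsPartialComodule (ρ : M →ₗ[k] M ⊗[k] H) : Prop where
  counit : counitLast k H M ∘ₗ ρ = LinearMap.id
  pcm2 :
    mulLast k H (M ⊗[k] H) ∘ₗ antLast k H ((M ⊗[k] H) ⊗[k] H) ∘ₗ
        LinearMap.rTensor H (comulLast k H M) ∘ₗ LinearMap.rTensor H ρ ∘ₗ ρ =
    mulLast k H (M ⊗[k] H) ∘ₗ antLast k H ((M ⊗[k] H) ⊗[k] H) ∘ₗ
        LinearMap.rTensor H (LinearMap.rTensor H ρ) ∘ₗ LinearMap.rTensor H ρ ∘ₗ ρ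
  pcm3 :
    LinearMap.rTensor H (mulLast k H M) ∘ₗ LinearMap.rTensor H (antLast k H (M ⊗[k] H)) ∘ₗ
        comulLast k H (M ⊗[k] H) ∘ₗ LinearMap.rTensor H ρ ∘ₗ ρ =
    LinearMap.rTensor H (mulLast k H M) ∘ₗ LinearMap.rTensor H (antLast k H (M ⊗[k] H)) ∘ₗ
        LinearMap.rTensor H (LinearMap.rTensor H ρ) ∘ₗ LinearMap.rTensor H ρ ∘ₗ ρ


/-- Evaluate an algebra map `x : H → k` on the last tensor factor. -/
def evalLast (x : H →ₐ[k] k) (X : Type u) [AddCommGroup X] [Module k X] :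
    (X ⊗[k] H) →ₗ[k] X :=
  (TensorProduct.rid k X).toLinearMap ∘ₗ LinearMap.lTensor X x.toLinearMap

/-- The operator `P_x = (V ⊗ x ⊗ x)(V ⊗ S ⊗ H)(ρ ⊗ H)ρ`,
i.e. `P_x(v) = v^{(0)(0)} x(S(v^{(0)(1)}) v^{(1)})`. -/
def Pmap {V : Type u} [AddCommGroup V] [Module k V] (ρ : V →ₗ[k] V ⊗[k] H)
    (x : H →ₐ[k] k) : V →ₗ[k] V :=
  evalLast k H x V ∘ₗ evalLast k H x (V ⊗[k] H) ∘ₗ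
    LinearMap.rTensor H (antLast k H V) ∘ₗ LinearMap.rTensor H ρ ∘ₗ ρ


section AuxiliaryLemmas

@[simp] lemma evalLast_tmul (x : H →ₐ[k] k) (X : Type u) [AddCommGroup X] [Module k X]
    (w : X) (h : H) :
    evalLast k H x X (w ⊗ₜ[k] h) = x h • w := by
  simp [evalLast]

@[simp] lemma antLast_tmul (X : Type u) [AddCommGroup X] [Module k X] (w : X) (h : H) :
    antLast k H X (w ⊗ₜ[k] h) = w ⊗ₜ[k] (HopfAlgebra.antipode (R := k) (A := H) h) := by
  simp [antLast]

@[simp] lemma counitLast_tmul (X : Type u) [AddCommGroup X] [Module k X] (w : X) (h : H) :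
    counitLast k H X (w ⊗ₜ[k] h) = Coalgebra.counit (R := k) h • w := by
  simp [counitLast]

@[simp] lemma mulLast_tmul (X : Type u) [AddCommGroup X] [Module k X] (w : X) (a b : H) :
    mulLast k H X ((w ⊗ₜ[k] a) ⊗ₜ[k] b) = w ⊗ₜ[k] (a * b) := by
  simp [mulLast]

lemma comulLast_tmul (X : Type u) [AddCommGroup X] [Module k X] (w : X) (h : H)
    (r : Coalgebra.Repr k h (H × H)) :
    comulLast k H X (w ⊗ₜ[k] h) = ∑ i ∈ r.index, (w ⊗ₜ[k] r.left i) ⊗ₜ[k] r.right i := by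
  simp only [comulLast, LinearMap.coe_comp, Function.comp_apply, LinearMap.lTensor_tmul,
    LinearEquiv.coe_coe]
  rw [← r.eq, tmul_sum, map_sum]
  simp

variable (x : H →ₐ[k] k) {V : Type u} [AddCommGroup V] [Module k V]

/-- Apply `x ∘ S` to the last tensor factor. -/
def ESm : (V ⊗[k] H) →ₗ[k] V := evalLast k H x V ∘ₗ antLast k H V

/-- Apply `x ∘ S` to the middle factor and `x` to the last factor. -/
def Tm : ((V ⊗[k] H) ⊗[k] H) →ₗ[k] V :=
  evalLast k H x V ∘ₗ evalLast k H x (V ⊗[k] H) ∘ₗ LinearMap.rTensor H (antLast k H V)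

@[simp] lemma ESm_tmul (w : V) (h : H) :
    ESm k H x (w ⊗ₜ[k] h) = x (HopfAlgebra.antipode (R := k) (A := H) h) • w := by
  simp [ESm]

@[simp] lemma Tm_tmul (w : V ⊗[k] H) (g : H) :
    Tm k H x (w ⊗ₜ[k] g) = x g • ESm k H x w := by
  simp [Tm, ESm, LinearMap.rTensor_tmul]

lemma L2 (f : V →ₗ[k] V) :
    f ∘ₗ Tm k H x = Tm k H x ∘ₗ LinearMap.rTensor H (LinearMap.rTensor H f) := by
  ext v h g
  simp

lemma L5 (f : V →ₗ[k] V ⊗[k] H) :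
    Tm k H x ∘ₗ LinearMap.rTensor H f
      = evalLast k H x V ∘ₗ LinearMap.rTensor H (ESm k H x ∘ₗ f) := by
  ext v g
  simp

lemma L3 :
    Tm k H x ∘ₗ mulLast k H (V ⊗[k] H) ∘ₗ antLast k H ((V ⊗[k] H) ⊗[k] H) ∘ₗ
        LinearMap.rTensor H (comulLast k H V)
      = ESm k H x ∘ₗ LinearMap.rTensor H (counitLast k H V) := by
  ext v h g
  obtain r := Coalgebra.Repr.arbitrary k h
  simp only [TensorProduct.AlgebraTensorModule.curry_apply, TensorProduct.curry_apply,
    LinearMap.coe_restrictScalars, LinearMap.coe_comp, Function.comp_apply,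
    LinearMap.rTensor_tmul]
  rw [comulLast_tmul k H _ v h r, sum_tmul, map_sum, map_sum, map_sum]
  simp only [antLast_tmul, mulLast_tmul, Tm_tmul, ESm_tmul, counitLast_tmul, map_mul,
    map_smul, smul_smul]
  rw [← Finset.sum_smul]
  congr 1
  have key : ∑ i ∈ r.index,
      x (HopfAlgebra.antipode (R := k) (A := H) (r.left i)) * x (r.right i)
      = Coalgebra.counit (R := k) h := by
    simp only [← map_mul]
    rw [← map_sum, HopfAlgebra.sum_antipode_mul_eq_algebraMap_counit r, AlgHom.commutes]
    simp
  calc ∑ i ∈ r.index,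
        x (r.right i) * x (HopfAlgebra.antipode (R := k) (A := H) g) *
          x (HopfAlgebra.antipode (R := k) (A := H) (r.left i))
      = x (HopfAlgebra.antipode (R := k) (A := H) g) * ∑ i ∈ r.index,
          x (HopfAlgebra.antipode (R := k) (A := H) (r.left i)) * x (r.right i) := by
        rw [Finset.mul_sum]; exact Finset.sum_congr rfl fun i _ => by ring
    _ = _ := by rw [key]

lemma L4 (ρ : V →ₗ[k] V ⊗[k] H) :
    Tm k H x ∘ₗ mulLast k H (V ⊗[k] H) ∘ₗ antLast k H ((V ⊗[k] H) ⊗[k] H) ∘ₗ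
        LinearMap.rTensor H (LinearMap.rTensor H ρ)
      = ESm k H x ∘ₗ LinearMap.rTensor H
          (evalLast k H x V ∘ₗ LinearMap.rTensor H (ESm k H x ∘ₗ ρ)) := by
  ext v h g
  simp [smul_smul, mul_comm]

end AuxiliaryLemmas

/-- For a partial `H`-comodule `(V, ρ)` and an algebra map `x : H → k`,
the operator `P_x` is idempotent. -/
theorem Pmap_idempotent {V : Type u} [AddCommGroup V] [Module k V]
    (ρ : V →ₗ[k] V ⊗[k] H) (hρ : IsPartialComodule k H ρ) (x : H →ₐ[k] k) :
    Pmap k H ρ x ∘ₗ Pmap k H ρ x = Pmap k H ρ x := by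
  have hTP : ∀ w : V, Pmap k H ρ x w
      = Tm k H x (LinearMap.rTensor H ρ (ρ w)) := fun w => rfl
  have hM : ∀ w : V, Pmap k H ρ x w
      = evalLast k H x V
          (LinearMap.rTensor H (ESm k H x ∘ₗ ρ) (ρ w)) := by
    intro w
    rw [hTP w, ← LinearMap.comp_apply (Tm k H x), L5]
    simp only [LinearMap.comp_apply]
  have hMmap : (evalLast k H x V ∘ₗ LinearMap.rTensor H (ESm k H x ∘ₗ ρ)) ∘ₗ ρ
      = Pmap k H ρ x :=
    LinearMap.ext fun w => by
      simpa only [LinearMap.comp_apply] using (hM w).symm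
  have hA : ∀ w : V, ESm k H x (LinearMap.rTensor H (Pmap k H ρ x) (ρ w))
      = ESm k H x (ρ w) := by
    intro w
    have h2 := LinearMap.congr_fun hρ.pcm2 w
    simp only [LinearMap.comp_apply] at h2
    have h3 := congrArg (Tm k H x) h2
    have e1 := LinearMap.congr_fun (L3 k H x (V := V)) (LinearMap.rTensor H ρ (ρ w))
    have e2 := LinearMap.congr_fun (L4 k H x ρ) (LinearMap.rTensor H ρ (ρ w))
    simp only [LinearMap.comp_apply] at e1 e2
    rw [e1, e2] at h3
    rw [← LinearMap.rTensor_comp_apply, hρ.counit, LinearMap.rTensor_id,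
      LinearMap.id_apply, ← LinearMap.rTensor_comp_apply, hMmap] at h3
    rw [← h3]
  have hAmap : ESm k H x ∘ₗ (LinearMap.rTensor H (Pmap k H ρ x) ∘ₗ ρ)
      = ESm k H x ∘ₗ ρ :=
    LinearMap.ext fun w => by simpa only [LinearMap.comp_apply] using hA w
  apply LinearMap.ext
  intro v
  simp only [LinearMap.comp_apply]
  rw [hTP v]
  rw [← LinearMap.comp_apply (Pmap k H ρ x) (Tm k H x), L2 k H x (Pmap k H ρ x)]
  simp only [LinearMap.comp_apply]
  rw [← LinearMap.rTensor_comp_apply,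
    ← LinearMap.comp_apply (Tm k H x), L5 k H x (LinearMap.rTensor H (Pmap k H ρ x) ∘ₗ ρ)]
  simp only [LinearMap.comp_apply]
  rw [show ESm k H x ∘ₗ (LinearMap.rTensor H (Pmap k H ρ x) ∘ₗ ρ) = ESm k H x ∘ₗ ρ
    from hAmap]
  exact (hM v).symm


end
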